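/- Let p ∈ [1,∞), and suppose there exist a continuously differentiable V : D → [0,∞) and constants γ, δ ≥ 0, c > 0 such that for every x, u, w ∈ D one has ∇V(x)·f(u, x, w) ≤ −c|h(x)|^p + γ^p c|h(u)|^p + δ^p c|h(w)|^p. Then for every ξ ∈ D, all continuous inputs u, w : [0,∞) → D, and every solution x of the single-component system with inputs u, w and x(0) = ξ, one has ‖h∘x‖_{[0,t],p} ≤ γ‖h∘u‖_{[0,t],p} + δ‖h∘w‖_{[0,t],p} + (c^{−1}V(ξ))^{1/p} for all t ≥ 0. -/

import Mathlib

open scoped NNReal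


/-- The `L^p` norm of a signal `y` on the interval `[0, t]`:
`‖y‖_{[0,t],p} = (∫_0^t |y(s)|^p ds)^{1/p}`. -/
noncomputable def lpNorm {m : ℕ} (p : ℝ) (y : ℝ → EuclideanSpace ℝ (Fin m)) (t : ℝ) : ℝ :=
  (∫ s in (0:ℝ)..t, ‖y s‖ ^ p) ^ (1 / p)

/-- Subadditivity of `x ↦ x ^ q` on nonnegative reals for `0 ≤ q ≤ 1`. -/
lemma real_rpow_add_le_add_rpow {a b q : ℝ} (ha : 0 ≤ a) (hb : 0 ≤ b)
    (hq0 : 0 ≤ q) (hq1 : q ≤ 1) : (a + b) ^ q ≤ a ^ q + b ^ q := by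
  have key := NNReal.rpow_add_le_add_rpow a.toNNReal b.toNNReal hq0 hq1
  have key' := NNReal.coe_le_coe.2 key
  push_cast at key'
  rwa [Real.coe_toNNReal a ha, Real.coe_toNNReal b hb] at key'

/-- Proposition 1: a Lyapunov-type dissipation inequality for a single component
implies the trajectory estimate (3.2) with `Q(ξ) = (c⁻¹ V(ξ))^{1/p}`. -/
theorem trajectory_estimate_from_lyapunov {k m : ℕ}
    (D : Set (EuclideanSpace ℝ (Fin k))) (hDopen : IsOpen D) (hD0 : (0 : EuclideanSpace ℝ (Fin k)) ∈ D)
    (h : EuclideanSpace ℝ (Fin k) → EuclideanSpace ℝ (Fin m))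
    (hhcont : ContinuousOn h D) (hh0 : h 0 = 0)
    (f : EuclideanSpace ℝ (Fin k) → EuclideanSpace ℝ (Fin k) → EuclideanSpace ℝ (Fin k) →
      EuclideanSpace ℝ (Fin k))
    (hf : LocallyLipschitzOn (D ×ˢ D ×ˢ D)
      (fun q : EuclideanSpace ℝ (Fin k) × EuclideanSpace ℝ (Fin k) × EuclideanSpace ℝ (Fin k) =>
        f q.1 q.2.1 q.2.2))
    (p : ℝ) (hp : 1 ≤ p)
    (V : EuclideanSpace ℝ (Fin k) → ℝ) (hV : ContDiffOn ℝ 1 V D) (hV0 : ∀ x ∈ D, 0 ≤ V x)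
    (γ δ c : ℝ) (hγ : 0 ≤ γ) (hδ : 0 ≤ δ) (hc : 0 < c)
    -- the dissipation inequality (3.3): ∇V(x)·f(u,x,w) ≤ −c|h(x)|^p + γ^p c|h(u)|^p + δ^p c|h(w)|^p
    (Hdiss : ∀ x ∈ D, ∀ u ∈ D, ∀ w ∈ D,
      fderiv ℝ V x (f u x w) ≤
        -c * ‖h x‖ ^ p + γ ^ p * c * ‖h u‖ ^ p + δ ^ p * c * ‖h w‖ ^ p) :
    -- conclusion: the trajectory estimate (3.2)
    ∀ ξ ∈ D, ∀ u w : ℝ → EuclideanSpace ℝ (Fin k),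
      ContinuousOn u (Set.Ici 0) → ContinuousOn w (Set.Ici 0) →
      (∀ t ≥ (0:ℝ), u t ∈ D) → (∀ t ≥ (0:ℝ), w t ∈ D) →
      ∀ x : ℝ → EuclideanSpace ℝ (Fin k),
        (∀ t ≥ (0:ℝ), x t ∈ D) → x 0 = ξ →
        (∀ t ≥ (0:ℝ), HasDerivAt x (f (u t) (x t) (w t)) t) →
        ∀ t ≥ (0:ℝ),
          lpNorm p (fun s => h (x s)) t ≤
            γ * lpNorm p (fun s => h (u s)) t + δ * lpNorm p (fun s => h (w s)) t +
            (c⁻¹ * V ξ) ^ (1 / p) := by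
  intro ξ hξ u w hu hw huD hwD x hxD hx0 hx' t ht
  have hp0 : 0 < p := lt_of_lt_of_le one_pos hp
  have hp0' : 0 ≤ p := hp0.le
  -- continuity of the trajectory on `Ici 0`
  have hxcont : ContinuousOn x (Set.Ici 0) := fun s hs =>
    ((hx' s hs).continuousAt).continuousWithinAt
  -- continuity of the integrands on `Ici 0`
  have hhx : ContinuousOn (fun s => ‖h (x s)‖ ^ p) (Set.Ici 0) := by
    have : ContinuousOn (fun s => h (x s)) (Set.Ici 0) :=
      hhcont.comp hxcont (fun s hs => hxD s hs)
    exact (this.norm).rpow_const (fun s _ => Or.inr hp0')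
  have hhu : ContinuousOn (fun s => ‖h (u s)‖ ^ p) (Set.Ici 0) := by
    have : ContinuousOn (fun s => h (u s)) (Set.Ici 0) :=
      hhcont.comp hu (fun s hs => huD s hs)
    exact (this.norm).rpow_const (fun s _ => Or.inr hp0')
  have hhw : ContinuousOn (fun s => ‖h (w s)‖ ^ p) (Set.Ici 0) := by
    have : ContinuousOn (fun s => h (w s)) (Set.Ici 0) :=
      hhcont.comp hw (fun s hs => hwD s hs)
    exact (this.norm).rpow_const (fun s _ => Or.inr hp0')
  have hIcc : Set.uIcc (0:ℝ) t ⊆ Set.Ici 0 := by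
    rw [Set.uIcc_of_le ht]; exact fun s hs => hs.1
  -- the derivative of V ∘ x
  set g' : ℝ → ℝ := fun s => fderiv ℝ V (x s) (f (u s) (x s) (w s)) with hg'
  have hgderiv : ∀ s ∈ Set.uIcc (0:ℝ) t, HasDerivAt (fun s => V (x s)) (g' s) s := by
    intro s hs
    rw [Set.uIcc_of_le ht] at hs
    have hsD : x s ∈ D := hxD s hs.1
    have hVd : HasFDerivAt V (fderiv ℝ V (x s)) (x s) :=
      ((hV.differentiableOn one_ne_zero (x s) hsD).differentiableAt
        (hDopen.mem_nhds hsD)).hasFDerivAt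
    exact hVd.comp_hasDerivAt s (hx' s hs.1)
  -- continuity of g' on Ici 0
  have hg'cont : ContinuousOn g' (Set.Ici 0) := by
    have h1 : ContinuousOn (fun s => fderiv ℝ V (x s)) (Set.Ici 0) :=
      (hV.continuousOn_fderiv_of_isOpen hDopen le_rfl).comp hxcont (fun s hs => hxD s hs)
    have h2 : ContinuousOn (fun s => f (u s) (x s) (w s)) (Set.Ici 0) := by
      have hfc : ContinuousOn
          (fun q : EuclideanSpace ℝ (Fin k) × EuclideanSpace ℝ (Fin k) × EuclideanSpace ℝ (Fin k)
            => f q.1 q.2.1 q.2.2) (D ×ˢ D ×ˢ D) := hf.continuousOn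
      have hmap : ContinuousOn (fun s => ((u s), (x s), (w s))) (Set.Ici 0) :=
        hu.prodMk (hxcont.prodMk hw)
      exact hfc.comp hmap (fun s hs => ⟨huD s hs, hxD s hs, hwD s hs⟩)
    exact h1.clm_apply h2
  have hg'int : IntervalIntegrable g' MeasureTheory.volume 0 t :=
    (hg'cont.mono hIcc).intervalIntegrable
  -- FTC
  have hFTC : ∫ s in (0:ℝ)..t, g' s = V (x t) - V (x 0) :=
    intervalIntegral.integral_eq_sub_of_hasDerivAt hgderiv hg'int
  -- the bound function
  set G : ℝ → ℝ := fun s =>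
    -c * ‖h (x s)‖ ^ p + γ ^ p * c * ‖h (u s)‖ ^ p + δ ^ p * c * ‖h (w s)‖ ^ p with hG
  have hGcont : ContinuousOn G (Set.Ici 0) := by
    apply ContinuousOn.add
    apply ContinuousOn.add
    · exact hhx.const_smul (-c)
    · exact hhu.const_smul (γ ^ p * c)
    · exact hhw.const_smul (δ ^ p * c)
  have hGint : IntervalIntegrable G MeasureTheory.volume 0 t :=
    (hGcont.mono hIcc).intervalIntegrable
  have hmono : ∫ s in (0:ℝ)..t, g' s ≤ ∫ s in (0:ℝ)..t, G s := by
    apply intervalIntegral.integral_mono_on ht hg'int hGint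
    intro s hs
    exact Hdiss (x s) (hxD s hs.1) (u s) (huD s hs.1) (w s) (hwD s hs.1)
  -- integrability of the three pieces
  have hxint : IntervalIntegrable (fun s => ‖h (x s)‖ ^ p) MeasureTheory.volume 0 t :=
    (hhx.mono hIcc).intervalIntegrable
  have huint : IntervalIntegrable (fun s => ‖h (u s)‖ ^ p) MeasureTheory.volume 0 t :=
    (hhu.mono hIcc).intervalIntegrable
  have hwint : IntervalIntegrable (fun s => ‖h (w s)‖ ^ p) MeasureTheory.volume 0 t :=
    (hhw.mono hIcc).intervalIntegrable
  set A : ℝ := ∫ s in (0:ℝ)..t, ‖h (x s)‖ ^ p with hA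
  set B : ℝ := ∫ s in (0:ℝ)..t, ‖h (u s)‖ ^ p with hB
  set C : ℝ := ∫ s in (0:ℝ)..t, ‖h (w s)‖ ^ p with hC
  have hGval : ∫ s in (0:ℝ)..t, G s = -c * A + γ ^ p * c * B + δ ^ p * c * C := by
    rw [hG]
    rw [intervalIntegral.integral_add (((hxint.const_mul (-c)).add
        (huint.const_mul (γ ^ p * c)))) (hwint.const_mul (δ ^ p * c)),
      intervalIntegral.integral_add (hxint.const_mul (-c)) (huint.const_mul (γ ^ p * c)),
      intervalIntegral.integral_const_mul, intervalIntegral.integral_const_mul,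
      intervalIntegral.integral_const_mul]
  -- nonnegativity of the integrals
  have hA0 : 0 ≤ A := intervalIntegral.integral_nonneg ht
    (fun s _ => Real.rpow_nonneg (norm_nonneg _) p)
  have hB0 : 0 ≤ B := intervalIntegral.integral_nonneg ht
    (fun s _ => Real.rpow_nonneg (norm_nonneg _) p)
  have hC0 : 0 ≤ C := intervalIntegral.integral_nonneg ht
    (fun s _ => Real.rpow_nonneg (norm_nonneg _) p)
  -- main integral inequality
  have hVt0 : 0 ≤ V (x t) := hV0 (x t) (hxD t ht)
  have hkey : A ≤ γ ^ p * B + δ ^ p * C + c⁻¹ * V ξ := by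
    have h1 : V (x t) - V ξ ≤ -c * A + γ ^ p * c * B + δ ^ p * c * C := by
      rw [← hx0, ← hFTC]
      rw [hGval] at hmono
      exact hmono
    apply (mul_le_mul_iff_right₀ hc).1
    have e1 : c * (γ ^ p * B + δ ^ p * C + c⁻¹ * V ξ) = γ ^ p * c * B + δ ^ p * c * C + V ξ := by
      field_simp
    rw [e1]
    linarith
  -- pass to p-th roots
  have hq0 : 0 ≤ 1 / p := by positivity
  have hq1 : 1 / p ≤ 1 := by
    rw [div_le_one hp0]; exact hp
  have hVξ0 : 0 ≤ c⁻¹ * V ξ := mul_nonneg (inv_nonneg.2 hc.le) (hV0 ξ hξ)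
  have hγB0 : 0 ≤ γ ^ p * B := mul_nonneg (Real.rpow_nonneg hγ p) hB0
  have hδC0 : 0 ≤ δ ^ p * C := mul_nonneg (Real.rpow_nonneg hδ p) hC0
  have step1 : A ^ (1/p) ≤ (γ ^ p * B + δ ^ p * C + c⁻¹ * V ξ) ^ (1/p) :=
    Real.rpow_le_rpow hA0 hkey hq0
  have step2 : (γ ^ p * B + δ ^ p * C + c⁻¹ * V ξ) ^ (1/p) ≤
      (γ ^ p * B) ^ (1/p) + (δ ^ p * C) ^ (1/p) + (c⁻¹ * V ξ) ^ (1/p) := by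
    calc (γ ^ p * B + δ ^ p * C + c⁻¹ * V ξ) ^ (1/p)
        ≤ (γ ^ p * B + δ ^ p * C) ^ (1/p) + (c⁻¹ * V ξ) ^ (1/p) :=
          real_rpow_add_le_add_rpow (by linarith) hVξ0 hq0 hq1
      _ ≤ (γ ^ p * B) ^ (1/p) + (δ ^ p * C) ^ (1/p) + (c⁻¹ * V ξ) ^ (1/p) := by
          have := real_rpow_add_le_add_rpow hγB0 hδC0 hq0 hq1
          linarith
  have hpinv : p * (1/p) = 1 := mul_one_div_cancel (ne_of_gt hp0)
  have hγmul : (γ ^ p * B) ^ (1/p) = γ * B ^ (1/p) := by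
    rw [Real.mul_rpow (Real.rpow_nonneg hγ p) hB0, ← Real.rpow_mul hγ, hpinv, Real.rpow_one]
  have hδmul : (δ ^ p * C) ^ (1/p) = δ * C ^ (1/p) := by
    rw [Real.mul_rpow (Real.rpow_nonneg hδ p) hC0, ← Real.rpow_mul hδ, hpinv, Real.rpow_one]
  show A ^ (1/p) ≤ γ * B ^ (1/p) + δ * C ^ (1/p) + (c⁻¹ * V ξ) ^ (1/p)
  rw [← hγmul, ← hδmul]
  exact le_trans step1 step2
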